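/- For any function f : Sₙ → ℝ on the symmetric group such that |f(π) − f(π∘τ)| ≤ c for every transposition τ and permutation π, and π chosen uniformly at random, P[f(π) ≤ E[f(π)] − t] ≤ exp(−t²/(c²n)) for every t ≥ 0. -/

import Mathlib

lemma keyAB (h : ℝ) :
    4 * (Real.exp h - 1 - h) * (Real.exp (-h) - 1 + h) ≤
      h ^ 2 * (Real.exp h + Real.exp (-h) - 2) := by
  have hpos : 0 < Real.exp h := Real.exp_pos h
  have hinv : Real.exp (-h) = (Real.exp h)⁻¹ := Real.exp_neg h
  rw [hinv]
  have key : h ^ 2 * (Real.exp h + (Real.exp h)⁻¹ - 2)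
      - 4 * (Real.exp h - 1 - h) * ((Real.exp h)⁻¹ - 1 + h)
      = ((h - 2) * (Real.exp h - 1) + 2 * h) ^ 2 / Real.exp h := by
    field_simp
    ring
  nlinarith [key, div_nonneg (sq_nonneg ((h - 2) * (Real.exp h - 1) + 2 * h)) hpos.le]

lemma lemA (q h : ℝ) (hq0 : 0 ≤ q) (hq1 : q ≤ 1) (hh : 0 ≤ h) :
    (1 - q) * Real.exp (-q * h) + q * Real.exp ((1 - q) * h) ≤ Real.exp (h ^ 2 / 4) := by
  rcases eq_or_lt_of_le hh with h0 | hpos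
  · rw [← h0]; norm_num
  have hA0 : 0 < Real.exp h - 1 - h := by
    have := Real.add_one_lt_exp (ne_of_gt hpos)
    linarith
  have hB0 : 0 ≤ Real.exp (-h) - 1 + h := by
    have := Real.add_one_le_exp (-h)
    linarith
  have e1 : Real.exp ((1 - q) * h) = Real.exp (-q * h) * Real.exp h := by
    rw [← Real.exp_add]; ring_nf
  have e2 : Real.exp (-q * h) = Real.exp ((1 - q) * h) * Real.exp (-h) := by
    rw [← Real.exp_add]; ring_nf
  have bound1 : (1 - q) * Real.exp (-q * h) + q * Real.exp ((1 - q) * h)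
      ≤ Real.exp (q * (Real.exp h - 1 - h)) := by
    have step : (1 - q) * Real.exp (-q * h) + q * Real.exp ((1 - q) * h)
        = Real.exp (-q * h) * (1 + q * (Real.exp h - 1)) := by
      rw [e1]; ring
    rw [step]
    have h1 : 1 + q * (Real.exp h - 1) ≤ Real.exp (q * (Real.exp h - 1)) := by
      have := Real.add_one_le_exp (q * (Real.exp h - 1)); linarith
    calc Real.exp (-q * h) * (1 + q * (Real.exp h - 1))
        ≤ Real.exp (-q * h) * Real.exp (q * (Real.exp h - 1)) := by
          apply mul_le_mul_of_nonneg_left h1 (Real.exp_pos _).le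
      _ = Real.exp (q * (Real.exp h - 1 - h)) := by rw [← Real.exp_add]; ring_nf
  have bound2 : (1 - q) * Real.exp (-q * h) + q * Real.exp ((1 - q) * h)
      ≤ Real.exp ((1 - q) * (Real.exp (-h) - 1 + h)) := by
    have step : (1 - q) * Real.exp (-q * h) + q * Real.exp ((1 - q) * h)
        = Real.exp ((1 - q) * h) * (1 + (1 - q) * (Real.exp (-h) - 1)) := by
      rw [e2]; ring
    rw [step]
    have h1 : 1 + (1 - q) * (Real.exp (-h) - 1) ≤ Real.exp ((1 - q) * (Real.exp (-h) - 1)) := by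
      have := Real.add_one_le_exp ((1 - q) * (Real.exp (-h) - 1)); linarith
    calc Real.exp ((1 - q) * h) * (1 + (1 - q) * (Real.exp (-h) - 1))
        ≤ Real.exp ((1 - q) * h) * Real.exp ((1 - q) * (Real.exp (-h) - 1)) := by
          apply mul_le_mul_of_nonneg_left h1 (Real.exp_pos _).le
      _ = Real.exp ((1 - q) * (Real.exp (-h) - 1 + h)) := by rw [← Real.exp_add]; ring_nf
  by_cases hcase : q * (Real.exp h - 1 - h) ≤ h ^ 2 / 4
  · exact bound1.trans (Real.exp_le_exp.mpr hcase)
  · push_neg at hcase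
    have h2 : (1 - q) * (Real.exp (-h) - 1 + h) ≤ h ^ 2 / 4 := by
      nlinarith [keyAB h, mul_nonneg (le_of_lt (by nlinarith : (0:ℝ) < 4 * (q * (Real.exp h - 1 - h)) - h ^ 2)) hB0]
    exact bound2.trans (Real.exp_le_exp.mpr h2)

lemma lemB {ι : Type*} [Fintype ι] [Nonempty ι] (v : ι → ℝ) (c L : ℝ)
    (hc : 0 ≤ c) (hL : 0 ≤ L) (hv : ∀ p q, v p - v q ≤ c) :
    ∑ p, Real.exp (L * v p) ≤
      (Fintype.card ι : ℝ) *
        Real.exp (L * ((∑ p, v p) / (Fintype.card ι : ℝ)) + L ^ 2 * c ^ 2 / 4) := by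
  have hN : (0:ℝ) < (Fintype.card ι : ℝ) := by
    exact_mod_cast Fintype.card_pos
  set N : ℝ := (Fintype.card ι : ℝ) with hNdef
  set μ : ℝ := (∑ p, v p) / N with hμ
  rcases eq_or_lt_of_le hc with hc0 | hcpos
  · -- c = 0 : v is constant
    have hconst : ∀ p, v p = μ := by
      intro p
      have h1 : ∀ q, v q = v p := by
        intro q
        have := hv q p; have := hv p q
        rw [← hc0] at *
        linarith
      have : ∑ q, v q = N * v p := by
        rw [Finset.sum_congr rfl (fun q _ => h1 q)]
        simp [hNdef, Finset.sum_const, nsmul_eq_mul]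
      rw [hμ, this]
      field_simp
    calc ∑ p, Real.exp (L * v p) = ∑ p : ι, Real.exp (L * μ) := by
          refine Finset.sum_congr rfl fun p _ => by rw [hconst p]
      _ = N * Real.exp (L * μ) := by simp [hNdef, Finset.sum_const, nsmul_eq_mul]
      _ ≤ N * Real.exp (L * μ + L ^ 2 * c ^ 2 / 4) := by
          apply mul_le_mul_of_nonneg_left _ hN.le
          apply Real.exp_le_exp.mpr
          nlinarith [sq_nonneg (L*c)]
  · -- c > 0
    obtain ⟨p₀, -, hp₀⟩ := Finset.exists_min_image Finset.univ v ⟨Classical.arbitrary ι, Finset.mem_univ _⟩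
    set a : ℝ := v p₀ with ha
    have hlow : ∀ p, a ≤ v p := fun p => hp₀ p (Finset.mem_univ p)
    have hhigh : ∀ p, v p ≤ a + c := fun p => by have := hv p p₀; linarith
    have hμlow : a ≤ μ := by
      rw [hμ, le_div_iff₀ hN]
      calc a * N = ∑ _p : ι, a := by simp [hNdef, Finset.sum_const, nsmul_eq_mul, mul_comm]
        _ ≤ ∑ p, v p := Finset.sum_le_sum fun p _ => hlow p
    have hμhigh : μ ≤ a + c := by
      rw [hμ, div_le_iff₀ hN]
      calc ∑ p, v p ≤ ∑ _p : ι, (a + c) := Finset.sum_le_sum fun p _ => hhigh p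
        _ = (a + c) * N := by simp [hNdef, Finset.sum_const, nsmul_eq_mul, mul_comm]; ring
      
    set q : ℝ := (μ - a) / c with hq
    have hq0 : 0 ≤ q := div_nonneg (by linarith) hcpos.le
    have hq1 : q ≤ 1 := by rw [hq, div_le_one hcpos]; linarith
    set hh : ℝ := L * c with hhdef
    have hh0 : 0 ≤ hh := mul_nonneg hL hcpos.le
    -- convexity bound, pointwise
    have hconv : ∀ p, Real.exp (L * v p) ≤
        ((a + c - v p) / c) * Real.exp (L * a) + ((v p - a) / c) * Real.exp (L * (a + c)) := by
      intro p
      have w1 : (0:ℝ) ≤ (a + c - v p) / c := div_nonneg (by linarith [hhigh p]) hcpos.le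
      have w2 : (0:ℝ) ≤ (v p - a) / c := div_nonneg (by linarith [hlow p]) hcpos.le
      have wsum : (a + c - v p) / c + (v p - a) / c = 1 := by
        field_simp
        ring
      have := convexOn_exp.2 (Set.mem_univ (L * a)) (Set.mem_univ (L * (a + c))) w1 w2 wsum
      simp only [smul_eq_mul] at this
      have harg : (a + c - v p) / c * (L * a) + (v p - a) / c * (L * (a + c)) = L * v p := by
        field_simp; ring
      rwa [harg] at this
    calc ∑ p, Real.exp (L * v p)
        ≤ ∑ p, (((a + c - v p) / c) * Real.exp (L * a) + ((v p - a) / c) * Real.exp (L * (a + c))) :=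
          Finset.sum_le_sum fun p _ => hconv p
      _ = (N * (a + c) - N * μ) / c * Real.exp (L * a)
          + (N * μ - N * a) / c * Real.exp (L * (a + c)) := by
          rw [Finset.sum_add_distrib, ← Finset.sum_mul, ← Finset.sum_mul]
          have h1 : ∑ p, (a + c - v p) / c = (N * (a + c) - N * μ) / c := by
            rw [← Finset.sum_div]
            congr 1
            rw [Finset.sum_sub_distrib]
            have : N * μ = ∑ p, v p := by
              rw [hμ]; field_simp
            simp [Finset.sum_const, nsmul_eq_mul, hNdef, this]
            rw [← this, hNdef]
            ring
          have h2 : ∑ p, (v p - a) / c = (N * μ - N * a) / c := by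
            rw [← Finset.sum_div]
            congr 1
            rw [Finset.sum_sub_distrib]
            have : N * μ = ∑ p, v p := by
              rw [hμ]; field_simp
            simp [Finset.sum_const, nsmul_eq_mul, hNdef, this]
            rw [← this, hNdef]
          rw [h1, h2]
      _ = N * ((1 - q) * Real.exp (-q * hh) + q * Real.exp ((1 - q) * hh)) * Real.exp (L * μ) := by
          have e1 : Real.exp (L * a) = Real.exp (-q * hh) * Real.exp (L * μ) := by
            rw [← Real.exp_add]
            congr 1
            rw [hq, hhdef]
            field_simp
            ring
          have e2 : Real.exp (L * (a + c)) = Real.exp ((1 - q) * hh) * Real.exp (L * μ) := by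
            rw [← Real.exp_add]
            congr 1
            rw [hq, hhdef]
            field_simp
            ring
          have q1 : (N * (a + c) - N * μ) / c = N * (1 - q) := by
            rw [hq]; field_simp; ring
          have q2 : (N * μ - N * a) / c = N * q := by
            rw [hq]; field_simp
          rw [e1, e2, q1, q2]; ring
      _ ≤ N * Real.exp (hh ^ 2 / 4) * Real.exp (L * μ) := by
          apply mul_le_mul_of_nonneg_right _ (Real.exp_pos _).le
          exact mul_le_mul_of_nonneg_left (lemA q hh hq0 hq1 hh0) hN.le
      _ = N * Real.exp (L * μ + L ^ 2 * c ^ 2 / 4) := by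
          rw [mul_assoc, ← Real.exp_add, hhdef]
          congr 2
          ring


open Equiv Equiv.Perm in
lemma decomp_eq {n : ℕ} (p : Fin (n + 1)) (σ : Perm (Fin n)) :
    decomposeFin.symm (p, σ) = Equiv.swap 0 p * decomposeFin.symm (0, σ) := by
  ext x
  refine Fin.cases ?_ (fun x => ?_) x
  · simp [decomposeFin_symm_apply_zero]
  · simp [decomposeFin_symm_apply_succ]

open Equiv Equiv.Perm in
lemma embed_mul {n : ℕ} (σ τ : Perm (Fin n)) :
    (decomposeFin.symm (0, σ * τ) : Perm (Fin (n + 1)))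
      = decomposeFin.symm (0, σ) * decomposeFin.symm (0, τ) := by
  ext x
  refine Fin.cases ?_ (fun x => ?_) x
  · simp [decomposeFin_symm_apply_zero]
  · simp [decomposeFin_symm_apply_succ]

open Equiv Equiv.Perm in
lemma embed_swap {n : ℕ} (i j : Fin n) :
    (decomposeFin.symm (0, Equiv.swap i j) : Perm (Fin (n + 1)))
      = Equiv.swap i.succ j.succ := by
  ext x
  refine Fin.cases ?_ (fun x => ?_) x
  · rw [decomposeFin_symm_apply_zero,
      Equiv.swap_apply_of_ne_of_ne (Fin.succ_ne_zero i).symm (Fin.succ_ne_zero j).symm]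
  · rw [decomposeFin_symm_apply_succ]
    simp only [Equiv.swap_apply_def, Fin.succ_inj]
    split_ifs <;> simp_all

open Equiv Equiv.Perm in
lemma swap_mul_decomp {n : ℕ} (p : Fin (n + 1)) (i j : Fin n) (σ : Perm (Fin n)) :
    decomposeFin.symm (p, Equiv.swap i j * σ)
      = Equiv.swap (Equiv.swap 0 p i.succ) (Equiv.swap 0 p j.succ)
        * decomposeFin.symm (p, σ) := by
  rw [decomp_eq, embed_mul, embed_swap, decomp_eq p σ, Equiv.swap_apply_apply,
    Equiv.swap_inv]
  simp only [mul_assoc, Equiv.swap_mul_self_mul]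

open Equiv Equiv.Perm in
lemma fst_decomp {n : ℕ} (π : Perm (Fin (n + 1))) :
    (decomposeFin π).1 = π 0 := by
  conv_rhs => rw [← Equiv.symm_apply_apply decomposeFin π]
  rw [← Prod.mk.eta (p := decomposeFin π), decomposeFin_symm_apply_zero]

open Equiv Equiv.Perm in
lemma swap_decomp {n : ℕ} (p q : Fin (n + 1)) (σ : Perm (Fin n)) :
    decomposeFin.symm (q, (decomposeFin (Equiv.swap p q * decomposeFin.symm (p, σ))).2)
      = Equiv.swap p q * decomposeFin.symm (p, σ) := by
  have h1 : (decomposeFin (Equiv.swap p q * decomposeFin.symm (p, σ))).1 = q := by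
    rw [fst_decomp, Perm.mul_apply, decomposeFin_symm_apply_zero, Equiv.swap_apply_left]
  conv_rhs => rw [← Equiv.symm_apply_apply decomposeFin
    (Equiv.swap p q * decomposeFin.symm (p, σ))]
  rw [← Prod.mk.eta (p := decomposeFin (Equiv.swap p q * decomposeFin.symm (p, σ))), h1]


open Equiv Equiv.Perm in
def Phi {n : ℕ} (p q : Fin (n + 1)) : Perm (Fin n) ≃ Perm (Fin n) where
  toFun σ := (decomposeFin (Equiv.swap p q * decomposeFin.symm (p, σ))).2
  invFun σ := (decomposeFin (Equiv.swap q p * decomposeFin.symm (q, σ))).2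
  left_inv σ := by
    dsimp only
    rw [swap_decomp p q σ, Equiv.swap_comm q p, Equiv.swap_mul_self_mul,
      Equiv.apply_symm_apply]
  right_inv σ := by
    dsimp only
    rw [swap_decomp q p σ, Equiv.swap_comm p q, Equiv.swap_mul_self_mul,
      Equiv.apply_symm_apply]

open Equiv Equiv.Perm in
lemma lemC (c L : ℝ) (hc : 0 ≤ c) (hL : 0 ≤ L) :
    ∀ (n : ℕ) (f : Perm (Fin n) → ℝ),
    (∀ π i j, |f π - f (Equiv.swap i j * π)| ≤ c) →
    ∑ π, Real.exp (L * f π) ≤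
      (n.factorial : ℝ) *
        Real.exp (L * ((∑ π, f π) / (n.factorial : ℝ)) + L ^ 2 * c ^ 2 * n / 4) := by
  intro n
  induction n with
  | zero =>
    intro f hf
    have hu : (Finset.univ : Finset (Perm (Fin 0))) = {1} := by
      apply Finset.eq_singleton_iff_unique_mem.mpr
      exact ⟨Finset.mem_univ 1, fun x _ => by ext y; exact y.elim0⟩
    rw [hu]
    simp [Nat.factorial]
  | succ n IH =>
    intro f hf
    set g : Fin (n + 1) → Perm (Fin n) → ℝ := fun p σ => f (decomposeFin.symm (p, σ)) with hg
    have hgbd : ∀ p (σ : Perm (Fin n)) i j, |g p σ - g p (Equiv.swap i j * σ)| ≤ c := by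
      intro p σ i j
      show |f _ - f _| ≤ c
      rw [swap_mul_decomp]
      exact hf _ _ _
    have hsum : ∀ F : Perm (Fin (n + 1)) → ℝ,
        ∑ π, F π = ∑ p, ∑ σ, F (decomposeFin.symm (p, σ)) := by
      intro F
      rw [← Equiv.sum_comp decomposeFin.symm F]
      exact Fintype.sum_prod_type _
    have hfact : (0:ℝ) < (n.factorial : ℝ) := by exact_mod_cast n.factorial_pos
    set μp : Fin (n + 1) → ℝ := fun p => (∑ σ, g p σ) / (n.factorial : ℝ) with hμp
    have hIH : ∀ p, ∑ σ, Real.exp (L * g p σ) ≤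
        (n.factorial : ℝ) * Real.exp (L * μp p + L ^ 2 * c ^ 2 * n / 4) :=
      fun p => IH (g p) (hgbd p)
    have hdiff : ∀ p q, μp p - μp q ≤ c := by
      intro p q
      have hre : ∑ σ, g q σ = ∑ σ, g q (Phi p q σ) := (Equiv.sum_comp (Phi p q) (g q)).symm
      have hterm : ∀ σ, g p σ - g q (Phi p q σ) ≤ c := by
        intro σ
        have h2 : g q (Phi p q σ) = f (Equiv.swap p q * decomposeFin.symm (p, σ)) := by
          show f _ = f _
          exact congrArg f (swap_decomp p q σ)
        rw [h2]
        calc g p σ - f (Equiv.swap p q * decomposeFin.symm (p, σ))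
            ≤ |g p σ - f (Equiv.swap p q * decomposeFin.symm (p, σ))| := le_abs_self _
          _ ≤ c := hf _ p q
      have hsum2 : ∑ σ, (g p σ - g q (Phi p q σ)) ≤ (n.factorial : ℝ) * c := by
        calc ∑ σ, (g p σ - g q (Phi p q σ)) ≤ ∑ _σ : Perm (Fin n), c :=
              Finset.sum_le_sum fun σ _ => hterm σ
          _ = (n.factorial : ℝ) * c := by
              simp [Finset.sum_const, nsmul_eq_mul, Fintype.card_perm]
      have : μp p - μp q = (∑ σ, (g p σ - g q (Phi p q σ))) / (n.factorial : ℝ) := by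
        rw [Finset.sum_sub_distrib, ← hre, hμp]
        field_simp
      rw [this, div_le_iff₀ hfact]
      linarith [hsum2]
    have hcard : ((Fintype.card (Fin (n + 1)) : ℕ) : ℝ) = ((n : ℝ) + 1) := by
      simp [Fintype.card_fin]
    have hB := lemB μp c L hc hL hdiff
    rw [hcard] at hB
    have hn1 : (0:ℝ) < (n : ℝ) + 1 := by positivity
    calc ∑ π : Perm (Fin (n + 1)), Real.exp (L * f π)
        = ∑ p, ∑ σ, Real.exp (L * g p σ) := hsum _
      _ ≤ ∑ p : Fin (n + 1), (n.factorial : ℝ) * Real.exp (L * μp p + L ^ 2 * c ^ 2 * n / 4) :=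
          Finset.sum_le_sum fun p _ => hIH p
      _ = (n.factorial : ℝ) * Real.exp (L ^ 2 * c ^ 2 * n / 4) * ∑ p, Real.exp (L * μp p) := by
          rw [Finset.mul_sum]
          refine Finset.sum_congr rfl fun p _ => ?_
          rw [Real.exp_add]; ring
      _ ≤ (n.factorial : ℝ) * Real.exp (L ^ 2 * c ^ 2 * n / 4) *
            (((n : ℝ) + 1) * Real.exp (L * ((∑ p, μp p) / ((n : ℝ) + 1)) + L ^ 2 * c ^ 2 / 4)) := by
          apply mul_le_mul_of_nonneg_left hB (by positivity)
      _ = ((n + 1).factorial : ℝ) *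
            Real.exp (L * ((∑ π : Perm (Fin (n + 1)), f π) / ((n + 1).factorial : ℝ))
              + L ^ 2 * c ^ 2 * ((n + 1 : ℕ) : ℝ) / 4) := by
          push_cast
          have hμsum : ∑ p, μp p = (∑ π : Perm (Fin (n + 1)), f π) / (n.factorial : ℝ) := by
            rw [hsum f, hμp, ← Finset.sum_div]
          have hfs : ((n + 1).factorial : ℝ) = ((n : ℝ) + 1) * (n.factorial : ℝ) := by
            rw [Nat.factorial_succ]; push_cast; ring
          rw [hμsum, hfs]
          rw [show (n.factorial : ℝ) * Real.exp (L ^ 2 * c ^ 2 * n / 4) *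
              (((n : ℝ) + 1) * Real.exp (L * ((∑ π : Perm (Fin (n + 1)), f π) / (n.factorial : ℝ) / ((n : ℝ) + 1)) + L ^ 2 * c ^ 2 / 4))
              = ((n : ℝ) + 1) * (n.factorial : ℝ) *
                (Real.exp (L ^ 2 * c ^ 2 * n / 4) *
                  Real.exp (L * ((∑ π : Perm (Fin (n + 1)), f π) / (n.factorial : ℝ) / ((n : ℝ) + 1)) + L ^ 2 * c ^ 2 / 4)) from by ring]
          rw [← Real.exp_add]
          congr 1
          rw [div_div]
          push_cast
          ring


open Equiv Equiv.Perm in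
/-- Maurey/McDiarmid concentration on the symmetric group:
if `f : Sₙ → ℝ` changes by at most `c` when the permutation is composed with
a transposition, then for `π` uniformly random and any `t ≥ 0`,
`P[f(π) ≤ E[f] − t] ≤ exp(−t²/(c²n))`. -/
theorem stmt9 (n : ℕ) (hn : 0 < n) (c t : ℝ) (hc : 0 < c) (ht : 0 ≤ t)
    (f : Equiv.Perm (Fin n) → ℝ)
    (hf : ∀ (π : Equiv.Perm (Fin n)) (i j : Fin n),
      |f π - f (π * Equiv.swap i j)| ≤ c) :
    ((Finset.univ.filter fun π : Equiv.Perm (Fin n) =>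
        f π ≤ (∑ σ : Equiv.Perm (Fin n), f σ) / (Nat.factorial n : ℝ) - t).card : ℝ)
        / (Nat.factorial n : ℝ)
      ≤ Real.exp (-(t ^ 2) / (c ^ 2 * n)) := by
  have hN : (0:ℝ) < (Nat.factorial n : ℝ) := by exact_mod_cast n.factorial_pos
  set N : ℝ := (Nat.factorial n : ℝ) with hNdef
  set μ : ℝ := (∑ σ : Perm (Fin n), f σ) / N with hμ
  have hnR : (0:ℝ) < (n : ℝ) := by exact_mod_cast hn
  set L : ℝ := 2 * t / (c ^ 2 * n) with hLdef
  have hL : 0 ≤ L := by positivity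
  set G : Perm (Fin n) → ℝ := fun π => μ - f π⁻¹ with hG
  have hGbd : ∀ (π : Perm (Fin n)) i j, |G π - G (Equiv.swap i j * π)| ≤ c := by
    intro π i j
    have h1 : G π - G (Equiv.swap i j * π) = f ((Equiv.swap i j * π)⁻¹) - f π⁻¹ := by
      simp only [hG]; ring
    have h2 : (Equiv.swap i j * π)⁻¹ = π⁻¹ * Equiv.swap i j := by
      rw [mul_inv_rev, Equiv.swap_inv]
    rw [h1, h2, abs_sub_comm]
    exact hf π⁻¹ i j
  have hinv : ∀ (F : Perm (Fin n) → ℝ), ∑ π : Perm (Fin n), F π⁻¹ = ∑ π, F π := by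
    intro F
    exact Equiv.sum_comp (Equiv.inv (Perm (Fin n))) F
  have hGsum : ∑ π, G π = 0 := by
    rw [hG]
    rw [Finset.sum_sub_distrib]
    rw [hinv f]
    have hcard : ∑ _π : Perm (Fin n), μ = N * μ := by
      simp [Finset.sum_const, nsmul_eq_mul, Fintype.card_perm, hNdef]
    rw [hcard, hμ]
    field_simp
    ring
  have hmgf := lemC c L hc.le hL n G hGbd
  rw [hGsum] at hmgf
  set S := Finset.univ.filter (fun π : Perm (Fin n) => f π ≤ μ - t) with hS
  have hre : ∑ π, Real.exp (L * G π) = ∑ π : Perm (Fin n), Real.exp (L * (μ - f π)) := by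
    rw [← hinv (fun π => Real.exp (L * (μ - f π)))]
  have hlow : (S.card : ℝ) * Real.exp (L * t) ≤ ∑ π, Real.exp (L * G π) := by
    rw [hre]
    calc (S.card : ℝ) * Real.exp (L * t) = ∑ _π ∈ S, Real.exp (L * t) := by
          rw [Finset.sum_const, nsmul_eq_mul]
      _ ≤ ∑ π ∈ S, Real.exp (L * (μ - f π)) := by
          apply Finset.sum_le_sum
          intro π hπ
          apply Real.exp_le_exp.mpr
          apply mul_le_mul_of_nonneg_left _ hL
          have := (Finset.mem_filter.mp hπ).2
          linarith
      _ ≤ ∑ π : Perm (Fin n), Real.exp (L * (μ - f π)) := by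
          apply Finset.sum_le_sum_of_subset_of_nonneg (Finset.subset_univ S)
          intro π _ _
          exact (Real.exp_pos _).le
  have hchain : (S.card : ℝ) * Real.exp (L * t) ≤ N * Real.exp (L ^ 2 * c ^ 2 * n / 4) := by
    refine hlow.trans (hmgf.trans ?_)
    apply mul_le_mul_of_nonneg_left _ hN.le
    apply Real.exp_le_exp.mpr
    simp
  have harg : L ^ 2 * c ^ 2 * n / 4 - L * t = -(t ^ 2) / (c ^ 2 * n) := by
    rw [hLdef]
    field_simp
    ring
  have hfinal : (S.card : ℝ) ≤ N * Real.exp (-(t ^ 2) / (c ^ 2 * n)) := by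
    rw [← harg, Real.exp_sub, ← mul_div_assoc, le_div_iff₀ (Real.exp_pos (L * t))]
    exact hchain

  rw [div_le_iff₀ hN]
  calc (S.card : ℝ) ≤ N * Real.exp (-(t ^ 2) / (c ^ 2 * n)) := hfinal
    _ = Real.exp (-(t ^ 2) / (c ^ 2 * n)) * N := by ring
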